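/- arXiv:1412.2068 — 4 statements merged into one kernel-verified Lean document; each statement's English description precedes it below -/
import Mathlib

section
/- Let N ≥ 1 be an integer and let Ω ⊂ ℝ^N be a bounded open set with boundary ∂Ω. Write d(x) = dist(x, ∂Ω) and, for ε > 0, S^ε = {x ∈ Ω : d(x) < ε}. Let ε̂ > 0 and assume: (a) d is twice continuously differentiable on S^ε̂ with ‖∇d(x)‖ = 1 there, and there is L > 0 with |Δd(x)| ≤ L for all x ∈ S^ε̂; (b) ρ : Ω → ℝ is continuous with ρ(x) > 0 for all x ∈ Ω; (c) there is a continuous function ρ̄ : (0, ε̂] → ℝ with ρ̄ > 0, ρ(x) ≤ ρ̄(d(x)) for all x ∈ S^ε̂, and ∫₀^ε̂ η ρ̄(η) dη < ∞. Then there exist ε ∈ (0, ε̂) and a twice continuously differentiable function V on S^ε such that ΔV(x) ≤ −ρ(x) for all x ∈ S^ε, V(x) > 0 for all x ∈ S^ε, and V(x) → 0 as d(x) → 0 (i.e. for every σ > 0 there is δ > 0 such that x ∈ S^ε and d(x) < δ imply V(x) < σ). -/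
open MeasureTheory Set
open intervalIntegral

/-- The Laplacian of `f : ℝ^N → ℝ`: the sum of the second partial derivatives. -/
noncomputable def euclidLaplacian {N : ℕ} (f : EuclideanSpace ℝ (Fin N) → ℝ)
    (x : EuclideanSpace ℝ (Fin N)) : ℝ :=
  ∑ i : Fin N,
    fderiv ℝ (fun y => fderiv ℝ f y (EuclideanSpace.single i 1)) x (EuclideanSpace.single i 1)

lemma sum_sq_fderiv_eq {N : ℕ} (d : EuclideanSpace ℝ (Fin N) → ℝ)
    (x : EuclideanSpace ℝ (Fin N)) :
    ∑ i : Fin N, (fderiv ℝ d x (EuclideanSpace.single i 1))^2 = ‖gradient d x‖^2 := by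
  have key : ∀ i : Fin N, fderiv ℝ d x (EuclideanSpace.single i 1) =
      gradient d x i := by
    intro i
    have : (inner ℝ (gradient d x) (EuclideanSpace.single i (1:ℝ)) : ℝ)
        = fderiv ℝ d x (EuclideanSpace.single i 1) := by
      rw [gradient, InnerProductSpace.toDual_symm_apply]
    rw [← this, EuclideanSpace.inner_single_right]
    simp
  simp_rw [key]
  rw [EuclideanSpace.norm_eq, Real.sq_sqrt (by positivity)]
  congr 1; ext i; rw [Real.norm_eq_abs, sq_abs]

lemma laplacian_comp {N : ℕ} {d : EuclideanSpace ℝ (Fin N) → ℝ}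
    {s : Set (EuclideanSpace ℝ (Fin N))}
    (hs : IsOpen s) (hd : ContDiffOn ℝ 2 d s) {ψ ψd : ℝ → ℝ}
    (hψ : ∀ y ∈ s, HasDerivAt ψ (ψd (d y)) (d y))
    {x : EuclideanSpace ℝ (Fin N)} (hx : x ∈ s) {b : ℝ} (hb : HasDerivAt ψd b (d x)) :
    euclidLaplacian (ψ ∘ d) x
      = b * ∑ i : Fin N, (fderiv ℝ d x (EuclideanSpace.single i 1))^2
        + ψd (d x) * euclidLaplacian d x := by
  have hdiff : ∀ y ∈ s, DifferentiableAt ℝ d y := fun y hy =>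
    (hd.contDiffAt (hs.mem_nhds hy)).differentiableAt (by norm_num)
  have hVd : ∀ y ∈ s, fderiv ℝ (ψ ∘ d) y = ψd (d y) • fderiv ℝ d y := fun y hy =>
    ((hψ y hy).comp_hasFDerivAt y (hdiff y hy).hasFDerivAt).fderiv
  have hfd2 : DifferentiableAt ℝ (fderiv ℝ d) x := by
    have h2 : ContDiffAt ℝ 2 d x := hd.contDiffAt (hs.mem_nhds hx)
    exact (h2.fderiv_right (m := 1) (by norm_num)).differentiableAt (by norm_num)
  have key : ∀ i : Fin N,
      fderiv ℝ (fun y => fderiv ℝ (ψ ∘ d) y (EuclideanSpace.single i 1)) x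
          (EuclideanSpace.single i 1)
        = b * (fderiv ℝ d x (EuclideanSpace.single i 1))^2
          + ψd (d x) *
            fderiv ℝ (fun y => fderiv ℝ d y (EuclideanSpace.single i 1)) x
              (EuclideanSpace.single i 1) := by
    intro i
    set e := EuclideanSpace.single i (1:ℝ)
    have hk : DifferentiableAt ℝ (fun y => fderiv ℝ d y e) x := by
      exact (ContinuousLinearMap.apply ℝ ℝ e).differentiableAt.comp x hfd2
    have h1 : HasFDerivAt (fun y => ψd (d y)) (b • fderiv ℝ d x) x :=
      hb.comp_hasFDerivAt x (hdiff x hx).hasFDerivAt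
    have hprod : HasFDerivAt (fun y => ψd (d y) * fderiv ℝ d y e)
        (ψd (d x) • fderiv ℝ (fun y => fderiv ℝ d y e) x
          + (fderiv ℝ d x e) • (b • fderiv ℝ d x)) x :=
      h1.mul hk.hasFDerivAt
    have heq : (fun y => fderiv ℝ (ψ ∘ d) y e) =ᶠ[nhds x]
        (fun y => ψd (d y) * fderiv ℝ d y e) := by
      filter_upwards [hs.mem_nhds hx] with y hy
      rw [hVd y hy]; rfl
    rw [heq.fderiv_eq, hprod.fderiv]
    simp only [ContinuousLinearMap.add_apply, ContinuousLinearMap.coe_smul',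
      Pi.smul_apply, smul_eq_mul]
    ring
  unfold euclidLaplacian
  rw [Finset.sum_congr rfl (fun i _ => key i), Finset.sum_add_distrib, ← Finset.mul_sum,
    ← Finset.mul_sum]

lemma barrier {L εh ε : ℝ} (hL : 0 < L) (ρbar : ℝ → ℝ)
    (hcont : ContinuousOn ρbar (Ioc 0 εh))
    (hpos : ∀ η ∈ Ioc 0 εh, 0 < ρbar η)
    (hint : IntegrableOn (fun η => η * ρbar η) (Ioc 0 εh) volume)
    (hε : ε ∈ Ioo 0 εh) :
    ∃ ψ ψd : ℝ → ℝ,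
      ContDiffOn ℝ 2 ψ (Ioo 0 ε) ∧
      (∀ t ∈ Ioo 0 ε, HasDerivAt ψ (ψd t) t) ∧
      (∀ t ∈ Ioo 0 ε, 0 ≤ ψd t) ∧
      (∀ t ∈ Ioo 0 ε, ∃ b, HasDerivAt ψd b t ∧ b + L * ψd t ≤ -ρbar t) ∧
      (∀ t ∈ Ioo 0 ε, 0 < ψ t) ∧
      (∀ σ > 0, ∃ δ > 0, ∀ t ∈ Ioo 0 ε, t < δ → ψ t < σ) := by
  obtain ⟨hε0, hεεh⟩ := hε
  set h : ℝ → ℝ := fun r => Real.exp (L * r) * ρbar r with hh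
  have hIccsub : ∀ {a b : ℝ}, 0 < a → b ≤ εh → Icc a b ⊆ Ioc 0 εh := by
    intro a b ha hb z hz
    exact ⟨lt_of_lt_of_le ha hz.1, le_trans hz.2 hb⟩
  have hcont_h : ContinuousOn h (Ioc 0 εh) :=
    ((Real.continuous_exp.comp (continuous_const.mul continuous_id)).continuousOn).mul hcont
  have h_nonneg : ∀ r ∈ Ioc 0 εh, 0 ≤ h r := fun r hr =>
    mul_nonneg (Real.exp_pos _).le (hpos r hr).le
  have h_pos : ∀ r ∈ Ioc 0 εh, 0 < h r := fun r hr =>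
    mul_pos (Real.exp_pos _) (hpos r hr)
  set F : ℝ → ℝ := fun s => ∫ r in s..ε, h r with hF
  have h_ii : ∀ {a b : ℝ}, 0 < a → a ≤ εh → 0 < b → b ≤ εh → IntervalIntegrable h volume a b := by
    intro a b ha ha' hb hb'
    apply ContinuousOn.intervalIntegrable
    apply hcont_h.mono
    intro z hz
    exact ⟨lt_of_lt_of_le (lt_min ha hb) hz.1, le_trans hz.2 (max_le ha' hb')⟩
  have hmeas_h : ∀ {s : ℝ}, 0 < s → s < εh → StronglyMeasurableAtFilter h (nhds s) := by
    intro s hs hs'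
    exact ⟨Ioo 0 εh, Ioo_mem_nhds hs hs',
      ((hcont_h.mono Ioo_subset_Ioc_self).aestronglyMeasurable measurableSet_Ioo)⟩
  have hcontAt_h : ∀ {s : ℝ}, 0 < s → s < εh → ContinuousAt h s := by
    intro s hs hs'
    exact (hcont_h.mono Ioo_subset_Ioc_self).continuousAt (Ioo_mem_nhds hs hs')
  have hF_deriv : ∀ {s : ℝ}, 0 < s → s ≤ ε → HasDerivAt F (-(h s)) s := by
    intro s hs hs'
    exact integral_hasDerivAt_left (h_ii hs (le_trans hs' hεεh.le) hε0 hεεh.le)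
      (hmeas_h hs (lt_of_le_of_lt hs' hεεh)) (hcontAt_h hs (lt_of_le_of_lt hs' hεεh))
  have hF_nonneg : ∀ {s : ℝ}, 0 < s → s ≤ ε → 0 ≤ F s := by
    intro s hs hs'
    apply intervalIntegral.integral_nonneg hs'
    intro r hr
    exact h_nonneg r (hIccsub hs hεεh.le hr)
  have hF_pos : ∀ {s : ℝ}, 0 < s → s < ε → 0 < F s := by
    intro s hs hs'
    apply intervalIntegral.intervalIntegral_pos_of_pos_on
      (h_ii hs (le_trans hs'.le hεεh.le) hε0 hεεh.le)
    · intro r hr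
      exact h_pos r ⟨lt_trans hs hr.1, le_trans hr.2.le hεεh.le⟩
    · exact hs'
  set u : ℝ → ℝ := fun s => Real.exp (-(L * s)) * F s with hu
  have hu_nonneg : ∀ {s : ℝ}, 0 < s → s ≤ ε → 0 ≤ u s := fun hs hs' =>
    mul_nonneg (Real.exp_pos _).le (hF_nonneg hs hs')
  have hu_pos : ∀ {s : ℝ}, 0 < s → s < ε → 0 < u s := fun hs hs' =>
    mul_pos (Real.exp_pos _) (hF_pos hs hs')
  have hu_deriv : ∀ {s : ℝ}, 0 < s → s ≤ ε → HasDerivAt u (-(L * u s) - ρbar s) s := by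
    intro s hs hs'
    have hexp : HasDerivAt (fun s : ℝ => Real.exp (-(L * s)))
        (-L * Real.exp (-(L * s))) s := by
      have : HasDerivAt (fun s : ℝ => -(L * s)) (-L) s := by
        have := ((hasDerivAt_id s).const_mul L).neg
        simp only [id, mul_one] at this
        exact this
      simpa [mul_comm] using this.exp
    have := hexp.mul (hF_deriv hs hs')
    have heq : -L * Real.exp (-(L * s)) * F s + Real.exp (-(L * s)) * -h s
        = -(L * u s) - ρbar s := by
      have : Real.exp (-(L * s)) * h s = ρbar s := by
        rw [hh]
        rw [← mul_assoc, ← Real.exp_add]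
        simp
      simp only [hu, hh] at this ⊢
      linear_combination -this
    rw [heq] at this
    exact this
  have hu_contOn : ∀ {a : ℝ}, 0 < a → ContinuousOn u (Icc a ε) := by
    intro a ha s hs
    exact (hu_deriv (lt_of_lt_of_le ha hs.1) hs.2).continuousAt.continuousWithinAt
  have hu_io : ∀ {a : ℝ}, 0 < a → IntegrableOn u (Ioc a ε) := by
    intro a ha
    exact ((hu_contOn ha).integrableOn_Icc).mono_set Ioc_subset_Icc_self
  have hFε : F ε = 0 := intervalIntegral.integral_same
  have hftc : ∀ {a : ℝ}, 0 < a → a ≤ ε →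
      (∫ s in a..ε, (L * u s + ρbar s)) = u a := by
    intro a ha ha'
    have hii : IntervalIntegrable (fun s => L * u s + ρbar s) volume a ε := by
      apply ContinuousOn.intervalIntegrable
      rw [uIcc_of_le ha']
      exact (continuousOn_const.mul (hu_contOn ha)).add (hcont.mono (hIccsub ha hεεh.le))
    have key := intervalIntegral.integral_eq_sub_of_hasDerivAt
      (f := fun s => -(u s)) (f' := fun s => L * u s + ρbar s) ?_ hii
    · rw [key]
      simp only [hu, hFε]
      ring
    · intro s hs
      rw [uIcc_of_le ha'] at hs
      have := (hu_deriv (lt_of_lt_of_le ha hs.1) hs.2).neg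
      convert this using 1
      · funext y; rfl
      · ring
  set C0 : ℝ := ∫ η in Ioc 0 εh, |η * ρbar η| with hC0
  have hrint : ∀ {a : ℝ}, 0 < a → a ≤ ε →
      IntervalIntegrable (fun r => r * ρbar r) volume a ε := by
    intro a ha ha'
    apply ContinuousOn.intervalIntegrable
    rw [uIcc_of_le ha']
    exact (continuousOn_id.mul (hcont.mono (hIccsub ha hεεh.le)))
  have hrbound : ∀ {a : ℝ}, 0 < a → a ≤ ε → (∫ r in a..ε, r * ρbar r) ≤ C0 := by
    intro a ha ha'
    rw [integral_of_le ha']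
    calc (∫ r in Ioc a ε, r * ρbar r) ≤ ∫ r in Ioc a ε, |r * ρbar r| := by
          apply setIntegral_mono_on (hrint ha ha').1 ((hrint ha ha').1.abs) measurableSet_Ioc
          intro r _; exact le_abs_self _
      _ ≤ C0 := by
          apply setIntegral_mono_set hint.abs
          · exact Filter.Eventually.of_forall (fun r => abs_nonneg _)
          · apply HasSubset.Subset.eventuallyLE
            intro r hr
            exact ⟨lt_trans ha hr.1, le_trans hr.2 hεεh.le⟩
  have hbound : ∀ {a : ℝ}, 0 < a → a ≤ ε →
      (∫ s in Ioc a ε, ‖u s‖) ≤ Real.exp (L * ε) * C0 := by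
    intro a ha ha'
    have h1 : (∫ s in Ioc a ε, ‖u s‖) = ∫ s in a..ε, u s := by
      rw [← integral_of_le ha']
      apply intervalIntegral.integral_congr
      intro s hs
      rw [uIcc_of_le ha'] at hs
      exact Real.norm_of_nonneg (hu_nonneg (lt_of_lt_of_le ha hs.1) hs.2)
    have h2 : L * (∫ s in a..ε, u s) = ∫ s in a..ε, (Real.exp (-(L * a)) * h s - ρbar s) := by
      have hiiu : IntervalIntegrable u volume a ε := by
        apply ContinuousOn.intervalIntegrable
        rw [uIcc_of_le ha']
        exact hu_contOn ha
      have hiiρ : IntervalIntegrable ρbar volume a ε := by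
        apply ContinuousOn.intervalIntegrable
        rw [uIcc_of_le ha']
        exact hcont.mono (hIccsub ha hεεh.le)
      have := hftc ha ha'
      rw [intervalIntegral.integral_add (hiiu.const_mul L) hiiρ,
        intervalIntegral.integral_const_mul] at this
      rw [intervalIntegral.integral_sub ((h_ii ha (le_trans ha' hεεh.le) hε0
        hεεh.le).const_mul _) hiiρ]
      rw [intervalIntegral.integral_const_mul]
      have h5 : u a = Real.exp (-(L * a)) * ∫ r in a..ε, h r := rfl
      linarith [this, h5]
    have h3 : (∫ s in a..ε, (Real.exp (-(L * a)) * h s - ρbar s))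
        ≤ ∫ s in a..ε, (L * Real.exp (L * ε)) * (s * ρbar s) := by
      apply intervalIntegral.integral_mono_on ha'
      · exact ((h_ii ha (le_trans ha' hεεh.le) hε0 hεεh.le).const_mul _).sub
          (by apply ContinuousOn.intervalIntegrable; rw [uIcc_of_le ha']
              exact hcont.mono (hIccsub ha hεεh.le))
      · exact (hrint ha ha').const_mul _
      · intro r hr
        have hr0 : 0 < r := lt_of_lt_of_le ha hr.1
        have hρ0 : 0 ≤ ρbar r := (hpos r (hIccsub ha hεεh.le hr)).le
        have hexpc : Real.exp (-(L * a)) * h r = Real.exp (L * (r - a)) * ρbar r := by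
          simp only [hh]
          rw [← mul_assoc, ← Real.exp_add]
          ring_nf
        rw [hexpc]
        have hx0 : 0 ≤ L * (r - a) := mul_nonneg hL.le (by linarith [hr.1])
        have hxε : L * (r - a) ≤ L * ε := by
          apply mul_le_mul_of_nonneg_left _ hL.le
          linarith [hr.2, ha]
        have hkey : Real.exp (L * (r - a)) - 1 ≤ (L * (r - a)) * Real.exp (L * (r - a)) := by
          set x := L * (r - a) with hxdef
          have e1 : (-x) + 1 ≤ Real.exp (-x) := Real.add_one_le_exp (-x)
          have e2 : Real.exp (-x) * Real.exp x = 1 := by rw [← Real.exp_add]; simp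
          have e3 := mul_le_mul_of_nonneg_right e1 (Real.exp_pos x).le
          rw [e2] at e3
          nlinarith [e3]
        have hkey2 : (L * (r - a)) * Real.exp (L * (r - a)) ≤ (L * r) * Real.exp (L * ε) := by
          apply mul_le_mul (by nlinarith) (Real.exp_le_exp.2 hxε) (Real.exp_pos _).le
          positivity
        nlinarith [hρ0, hkey, hkey2, Real.exp_pos (L * (r - a))]
    have h4 : (∫ s in a..ε, (L * Real.exp (L * ε)) * (s * ρbar s))
        ≤ (L * Real.exp (L * ε)) * C0 := by
      rw [intervalIntegral.integral_const_mul]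
      apply mul_le_mul_of_nonneg_left (hrbound ha ha')
      positivity
    rw [h1]
    have hLpos : 0 < L := hL
    nlinarith [h2, h3, h4]
  have hu_int : IntegrableOn u (Ioc 0 ε) volume := by
    apply MeasureTheory.integrableOn_Ioc_of_intervalIntegral_norm_bounded_left
      (I := Real.exp (L * ε) * C0) (a := fun n : ℕ => ε / (n + 1)) (l := Filter.atTop)
    · intro n
      exact hu_io (by positivity)
    · have h0 : Filter.Tendsto (fun n : ℕ => 1 / ((n : ℝ) + 1)) Filter.atTop (nhds 0) :=
        tendsto_one_div_add_atTop_nhds_zero_nat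
      have := h0.const_mul ε
      simpa [div_eq_mul_inv, mul_comm] using this
    · apply Filter.Eventually.of_forall
      intro n
      exact hbound (by positivity) (div_le_self hε0.le
        (by linarith [Nat.cast_nonneg (α := ℝ) n]))
  set ut : ℝ → ℝ := (Ioo 0 ε).indicator u with hut
  have hut_int : Integrable ut volume :=
    (integrable_indicator_iff measurableSet_Ioo).2 (hu_int.mono_set Ioo_subset_Ioc_self)
  have hut_nonneg : ∀ s, 0 ≤ ut s := by
    intro s
    apply indicator_nonneg
    intro r hr
    exact hu_nonneg hr.1 hr.2.le
  have hut_eq : ∀ {t : ℝ}, t ∈ Ioo 0 ε → ut =ᶠ[nhds t] u := by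
    intro t ht
    filter_upwards [Ioo_mem_nhds ht.1 ht.2] with s hs
    rw [hut, indicator_of_mem hs]
  set ψ : ℝ → ℝ := fun t => ∫ s in (0:ℝ)..t, ut s with hψdef
  have hψ_deriv : ∀ t ∈ Ioo 0 ε, HasDerivAt ψ (ut t) t := by
    intro t ht
    apply intervalIntegral.integral_hasDerivAt_right
      (hut_int.intervalIntegrable)
      ⟨univ, Filter.univ_mem, hut_int.aestronglyMeasurable.restrict⟩
    exact ((hu_deriv ht.1 ht.2.le).continuousAt).congr (hut_eq ht).symm
  have hu_cIoo : ContinuousOn u (Ioo 0 ε) := fun s hs =>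
    (hu_deriv hs.1 hs.2.le).continuousAt.continuousWithinAt
  have hu_c1 : ContDiffOn ℝ 1 u (Ioo 0 ε) := by
    rw [show (1 : WithTop ℕ∞) = 0 + 1 by norm_num]
    rw [contDiffOn_succ_iff_deriv_of_isOpen isOpen_Ioo]
    refine ⟨fun s hs => (hu_deriv hs.1 hs.2.le).differentiableAt.differentiableWithinAt,
      by simp, ?_⟩
    rw [contDiffOn_zero]
    apply ContinuousOn.congr
      ((continuousOn_const.mul hu_cIoo).neg.sub
        (hcont.mono (fun z hz => ⟨hz.1, le_trans hz.2.le hεεh.le⟩)))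
    intro s hs
    exact (hu_deriv hs.1 hs.2.le).deriv
  refine ⟨ψ, ut, ?_, hψ_deriv, ?_, ?_, ?_, ?_⟩
  · rw [show (2 : WithTop ℕ∞) = 1 + 1 by norm_num]
    rw [contDiffOn_succ_iff_deriv_of_isOpen isOpen_Ioo]
    refine ⟨fun t ht => (hψ_deriv t ht).differentiableAt.differentiableWithinAt,
      by simp, ?_⟩
    apply hu_c1.congr
    intro t ht
    rw [(hψ_deriv t ht).deriv, hut, indicator_of_mem ht]
  · intro t _
    exact hut_nonneg t
  · intro t ht
    refine ⟨-(L * u t) - ρbar t,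
      (hu_deriv ht.1 ht.2.le).congr_of_eventuallyEq (hut_eq ht), ?_⟩
    rw [hut, indicator_of_mem ht]
    linarith
  · intro t ht
    have hsplit : (∫ s in (0:ℝ)..(t/2), ut s) + (∫ s in (t/2)..t, ut s) = ψ t :=
      intervalIntegral.integral_add_adjacent_intervals
        (hut_int.intervalIntegrable) (hut_int.intervalIntegrable)
    have h1 : 0 ≤ ∫ s in (0:ℝ)..(t/2), ut s :=
      intervalIntegral.integral_nonneg (by linarith [ht.1]) (fun s _ => hut_nonneg s)
    have h2 : 0 < ∫ s in (t/2)..t, ut s := by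
      apply intervalIntegral.intervalIntegral_pos_of_pos_on (hut_int.intervalIntegrable)
      · intro s hs
        have hsmem : s ∈ Ioo 0 ε := ⟨by linarith [ht.1, hs.1], lt_trans hs.2 ht.2⟩
        rw [hut, indicator_of_mem hsmem]
        exact hu_pos hsmem.1 hsmem.2
      · linarith [ht.1]
    linarith
  · intro σ hσ
    have hicc : IntegrableOn ut (Icc 0 ε) volume := hut_int.integrableOn
    have hcont' := intervalIntegral.continuousOn_primitive (f := ut) (μ := volume)
      (a := 0) (b := ε) hicc
    have hcw := hcont' 0 ⟨le_rfl, hε0.le⟩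
    rw [ContinuousWithinAt] at hcw
    have hval : (∫ s in Ioc (0:ℝ) 0, ut s) = 0 := by simp
    rw [hval] at hcw
    have hmem : {x : ℝ | (∫ s in Ioc (0:ℝ) x, ut s) < σ} ∈ nhdsWithin 0 (Icc 0 ε) :=
      hcw (Iio_mem_nhds hσ)
    rw [Metric.mem_nhdsWithin_iff] at hmem
    obtain ⟨δ, hδ, hsub'⟩ := hmem
    refine ⟨δ, hδ, ?_⟩
    intro t ht htδ
    have hb : t ∈ Metric.ball 0 δ ∩ Icc 0 ε := by
      constructor
      · rw [Metric.mem_ball, Real.dist_eq, sub_zero, abs_of_pos ht.1]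
        exact htδ
      · exact ⟨ht.1.le, ht.2.le⟩
    have hlt := hsub' hb
    have heq : ψ t = ∫ s in Ioc 0 t, ut s := intervalIntegral.integral_of_le ht.1.le
    rw [heq]
    exact hlt




/-- Existence of the barrier `V` on a strip `S^ε` near the boundary (Lemma `lemma0`). -/
theorem stmt_0 (N : ℕ) (hN : 1 ≤ N) (Ω : Set (EuclideanSpace ℝ (Fin N)))
    (hΩopen : IsOpen Ω) (hΩbdd : Bornology.IsBounded Ω)
    (d : EuclideanSpace ℝ (Fin N) → ℝ)
    (hd : ∀ x, d x = Metric.infDist x (frontier Ω))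
    (S : ℝ → Set (EuclideanSpace ℝ (Fin N)))
    (hS : ∀ ε, S ε = {x ∈ Ω | d x < ε})
    (εh : ℝ) (hεh : 0 < εh)
    -- (a) regularity of the distance function near the boundary
    (hdC2 : ContDiffOn ℝ 2 d (S εh))
    (hgrad : ∀ x ∈ S εh, ‖gradient d x‖ = 1)
    (L : ℝ) (hL : 0 < L) (hΔd : ∀ x ∈ S εh, |euclidLaplacian d x| ≤ L)
    -- (b) the density ρ
    (ρ : EuclideanSpace ℝ (Fin N) → ℝ)
    (hρcont : ContinuousOn ρ Ω) (hρpos : ∀ x ∈ Ω, 0 < ρ x)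
    -- (c) the majorant ρbar
    (ρbar : ℝ → ℝ) (hρbarcont : ContinuousOn ρbar (Ioc 0 εh))
    (hρbarpos : ∀ η ∈ Ioc 0 εh, 0 < ρbar η)
    (hmaj : ∀ x ∈ S εh, ρ x ≤ ρbar (d x))
    (hint : IntegrableOn (fun η => η * ρbar η) (Ioc 0 εh) volume) :
    ∃ ε ∈ Ioo 0 εh, ∃ V : EuclideanSpace ℝ (Fin N) → ℝ,
      ContDiffOn ℝ 2 V (S ε) ∧
      (∀ x ∈ S ε, euclidLaplacian V x ≤ -ρ x) ∧
      (∀ x ∈ S ε, 0 < V x) ∧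
      (∀ σ > 0, ∃ δ > 0, ∀ x ∈ S ε, d x < δ → V x < σ) := by
  set ε : ℝ := εh / 2 with hεdef
  have hε : ε ∈ Ioo 0 εh := ⟨by positivity, by linarith⟩
  -- basic topology of S
  have hdcont : Continuous d := by
    have hdeq : d = fun x => Metric.infDist x (frontier Ω) := funext hd
    rw [hdeq]
    exact Metric.continuous_infDist_pt _
  have hSopen : ∀ e : ℝ, IsOpen (S e) := by
    intro e
    rw [hS e]
    exact hΩopen.inter (isOpen_Iio.preimage hdcont)
  have hsub : S ε ⊆ S εh := by
    rw [hS, hS]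
    exact fun x hx => ⟨hx.1, lt_trans hx.2 hε.2⟩
  -- d is positive on Ω
  have hd_pos : ∀ x ∈ Ω, 0 < d x := by
    intro x hx
    have hne : (frontier Ω).Nonempty := by
      by_contra hcon
      rw [not_nonempty_iff_eq_empty] at hcon
      have hclopen : IsClopen Ω := isClopen_iff_frontier_eq_empty.2 hcon
      haveI : Nonempty (Fin N) := ⟨⟨0, hN⟩⟩
      haveI : Nontrivial (EuclideanSpace ℝ (Fin N)) := by
        refine ⟨⟨0, EuclideanSpace.single ⟨0, hN⟩ 1, ?_⟩⟩
        intro hcontra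
        have := congrArg (fun v : EuclideanSpace ℝ (Fin N) => v ⟨0, hN⟩) hcontra
        simp at this
      rcases isClopen_iff.1 hclopen with h0 | h1
      · rw [h0] at hx; exact hx
      · rw [h1] at hΩbdd
        exact NormedSpace.unbounded_univ ℝ (EuclideanSpace ℝ (Fin N)) hΩbdd
    have hnotmem : x ∉ frontier Ω := by
      intro hmem
      rw [hΩopen.frontier_eq] at hmem
      exact hmem.2 hx
    rw [hd x]
    exact ((isClosed_frontier.notMem_iff_infDist_pos hne).1 hnotmem)
  have hmemIoo : ∀ x ∈ S ε, d x ∈ Ioo 0 ε := by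
    intro x hx
    rw [hS] at hx
    exact ⟨hd_pos x hx.1, hx.2⟩
  -- barrier function
  obtain ⟨ψ, ψd, hψC2, hψd, hψd_nonneg, hψd2, hψpos, hψlim⟩ :=
    barrier hL ρbar hρbarcont hρbarpos hint hε
  refine ⟨ε, hε, ψ ∘ d, ?_, ?_, ?_, ?_⟩
  · exact hψC2.comp (hdC2.mono hsub) (fun x hx => hmemIoo x hx)
  · intro x hx
    obtain ⟨b, hbderiv, hbineq⟩ := hψd2 (d x) (hmemIoo x hx)
    rw [laplacian_comp (hSopen ε) (hdC2.mono hsub)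
      (fun y hy => hψd (d y) (hmemIoo y hy)) hx hbderiv]
    rw [sum_sq_fderiv_eq, hgrad x (hsub hx)]
    have h1 : ψd (d x) * euclidLaplacian d x ≤ ψd (d x) * L := by
      apply mul_le_mul_of_nonneg_left _ (hψd_nonneg (d x) (hmemIoo x hx))
      exact le_trans (le_abs_self _) (hΔd x (hsub hx))
    have h2 : ρ x ≤ ρbar (d x) := hmaj x (hsub hx)
    have h3 := hbineq
    nlinarith
  · intro x hx
    exact hψpos (d x) (hmemIoo x hx)
  · intro σ hσ
    obtain ⟨δ, hδ, hδprop⟩ := hψlim σ hσ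
    exact ⟨δ, hδ, fun x hx hxδ => hδprop (d x) (hmemIoo x hx) hxδ⟩
end

section
/- Let N ≥ 1, let U ⊆ ℝ^N be open, let ρ : U → ℝ and ρ₀ > 0 satisfy ρ(x) ≥ ρ₀ for all x ∈ U, and let V : U → ℝ be twice continuously differentiable with ΔV(x) ≤ −ρ(x) for all x ∈ U. Let G : ℝ → ℝ be continuously differentiable with G′(s) ≥ α₀ > 0 for all s ∈ ℝ. Fix x₀ ∈ ℝ^N, t₀ ∈ ℝ, real numbers σ, c, reals λ ≥ 0, β ≥ 0, δ > 0, and M with M ≥ 2βN/ρ₀ + 2λδ/α₀. Suppose w : U × ℝ → ℝ satisfies G(w(x,t)) = −M·V(x) − σ + c − λ(t−t₀)² − β‖x−x₀‖² for all (x,t) ∈ U × ℝ. Then for every x ∈ U and every t with |t−t₀| ≤ δ, the function t ↦ w(x,t) is differentiable and ρ(x)·∂ₜw(x,t) ≤ Δₓ(G∘w(·,t))(x), where Δₓ(G∘w(·,t)) denotes the Laplacian in x of the map y ↦ G(w(y,t)). -/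
open Filter

/-- The Laplacian' of `f : ℝ^N → ℝ`: the sum of the second partial derivatives. -/
noncomputable def Laplacian' {N : ℕ} (f : EuclideanSpace ℝ (Fin N) → ℝ)
    (x : EuclideanSpace ℝ (Fin N)) : ℝ :=
  ∑ i : Fin N,
    fderiv ℝ (fun y => fderiv ℝ f y (EuclideanSpace.single i 1)) x (EuclideanSpace.single i 1)

theorem Laplacian_congr' {N : ℕ} {f g : EuclideanSpace ℝ (Fin N) → ℝ}
    {x : EuclideanSpace ℝ (Fin N)} (h : f =ᶠ[nhds x] g) : Laplacian' f x = Laplacian' g x := by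
  unfold Laplacian'
  refine Finset.sum_congr rfl fun i _ => ?_
  have h0 : fderiv ℝ f =ᶠ[nhds x] fderiv ℝ g := h.fderiv
  have h1 : (fun y => fderiv ℝ f y (EuclideanSpace.single i 1)) =ᶠ[nhds x]
      (fun y => fderiv ℝ g y (EuclideanSpace.single i 1)) :=
    h0.mono fun y hy => by simp only [hy]
  rw [h1.fderiv_eq]

theorem normsq_hasFDerivAt' (N : ℕ) (x₀ y : EuclideanSpace ℝ (Fin N)) :
    HasFDerivAt (fun z : EuclideanSpace ℝ (Fin N) => ‖z - x₀‖ ^ 2)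
      (∑ j, (2 * (y j - x₀ j)) • EuclideanSpace.proj (𝕜 := ℝ) j) y := by
  have hns : (fun z : EuclideanSpace ℝ (Fin N) => ‖z - x₀‖ ^ 2)
      = fun z => ∑ j, (z j - x₀ j) ^ 2 := by
    funext z
    simpa [sq_abs] using PiLp.norm_sq_eq_of_L2 _ (z - x₀)
  rw [hns]
  refine HasFDerivAt.fun_sum fun j _ => ?_
  have h1 : HasFDerivAt (fun z : EuclideanSpace ℝ (Fin N) => z j - x₀ j)
      (EuclideanSpace.proj (𝕜 := ℝ) j) y :=
    (EuclideanSpace.proj (𝕜 := ℝ) j).hasFDerivAt.sub_const _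
  simpa [pow_two, two_mul, add_smul] using h1.fun_mul h1

theorem lap_compute' (N : ℕ) (U : Set (EuclideanSpace ℝ (Fin N))) (hU : IsOpen U)
    (V : EuclideanSpace ℝ (Fin N) → ℝ) (hV : ContDiffOn ℝ 2 V U)
    (x₀ : EuclideanSpace ℝ (Fin N)) (M C β : ℝ)
    (x : EuclideanSpace ℝ (Fin N)) (hx : x ∈ U) :
    Laplacian' (fun y => -M * V y + C - β * ‖y - x₀‖ ^ 2) x
      = -M * Laplacian' V x - 2 * β * N := by
  have hVd : ∀ y ∈ U, DifferentiableAt ℝ V y := fun y hy =>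
    (hV.contDiffAt (hU.mem_nhds hy)).differentiableAt (by norm_num)
  have hDF : ∀ y ∈ U, HasFDerivAt (fun y => -M * V y + C - β * ‖y - x₀‖ ^ 2)
      (((-M) • fderiv ℝ V y) - β • ∑ j, (2 * (y j - x₀ j)) • EuclideanSpace.proj (𝕜 := ℝ) j)
      y := by
    intro y hy
    exact (((hVd y hy).hasFDerivAt.const_mul (-M)).add_const C).sub
      ((normsq_hasFDerivAt' N x₀ y).const_mul β)
  have key : ∀ i : Fin N,
      fderiv ℝ (fun y => fderiv ℝ (fun y => -M * V y + C - β * ‖y - x₀‖ ^ 2) y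
          (EuclideanSpace.single i 1)) x (EuclideanSpace.single i 1)
        = -M * fderiv ℝ (fun y => fderiv ℝ V y (EuclideanSpace.single i 1)) x
            (EuclideanSpace.single i 1) - 2 * β := by
    intro i
    have hiU : ∀ y ∈ U, fderiv ℝ (fun y => -M * V y + C - β * ‖y - x₀‖ ^ 2) y
        (EuclideanSpace.single i 1)
        = -M * fderiv ℝ V y (EuclideanSpace.single i 1) - β * (2 * (y i - x₀ i)) := by
      intro y hy
      rw [(hDF y hy).fderiv]
      simp [ContinuousLinearMap.sum_apply, EuclideanSpace.single_apply, mul_ite,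
        Finset.sum_ite_eq', mul_comm]
    have hEq : (fun y => fderiv ℝ (fun y => -M * V y + C - β * ‖y - x₀‖ ^ 2) y
        (EuclideanSpace.single i 1)) =ᶠ[nhds x]
        (fun y => -M * fderiv ℝ V y (EuclideanSpace.single i 1) - β * (2 * (y i - x₀ i))) :=
      eventuallyEq_of_mem (hU.mem_nhds hx) hiU
    rw [hEq.fderiv_eq]
    have hhi : DifferentiableAt ℝ (fun y => fderiv ℝ V y (EuclideanSpace.single i 1)) x := by
      have h2 : ContDiffAt ℝ 1 (fderiv ℝ V) x :=
        (hV.contDiffAt (hU.mem_nhds hx)).fderiv_right (by norm_num)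
      exact (h2.differentiableAt one_ne_zero).clm_apply (differentiableAt_const _)
    have hproj : HasFDerivAt (fun y : EuclideanSpace ℝ (Fin N) => β * (2 * (y i - x₀ i)))
        (β • ((2:ℝ) • EuclideanSpace.proj (𝕜 := ℝ) i)) x :=
      ((((EuclideanSpace.proj (𝕜 := ℝ) i).hasFDerivAt.sub_const (x₀ i)).const_mul
        (2:ℝ)).const_mul β)
    have hout := ((hhi.hasFDerivAt.const_mul (-M)).fun_sub hproj).fderiv
    rw [hout]
    simp [EuclideanSpace.single_apply, mul_comm]
  unfold Laplacian'
  rw [Finset.sum_congr rfl fun i _ => key i]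
  rw [Finset.sum_sub_distrib, ← Finset.mul_sum]
  simp [Finset.card_univ, mul_comm]

/-- The lower barrier `w = G⁻¹[-MV - σ + c - λ(t-t₀)² - β‖x-x₀‖²]` is a pointwise
subsolution of `ρ ∂ₜ u = Δ[G(u)]` when `inf ρ ≥ ρ₀ > 0`. -/
theorem stmt_4 (N : ℕ) (hN : 1 ≤ N) (U : Set (EuclideanSpace ℝ (Fin N))) (hU : IsOpen U)
    (ρ : EuclideanSpace ℝ (Fin N) → ℝ) (ρ₀ : ℝ) (hρ₀ : 0 < ρ₀)
    (hρ : ∀ x ∈ U, ρ₀ ≤ ρ x)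
    (V : EuclideanSpace ℝ (Fin N) → ℝ) (hV : ContDiffOn ℝ 2 V U)
    (hΔV : ∀ x ∈ U, Laplacian' V x ≤ -ρ x)
    (G : ℝ → ℝ) (hG : ContDiff ℝ 1 G)
    (α₀ : ℝ) (hα₀ : 0 < α₀) (hG' : ∀ s : ℝ, α₀ ≤ deriv G s)
    (x₀ : EuclideanSpace ℝ (Fin N)) (t₀ σ c lam β δ M : ℝ)
    (hlam : 0 ≤ lam) (hβ : 0 ≤ β) (hδ : 0 < δ)
    (hM : 2 * β * N / ρ₀ + 2 * lam * δ / α₀ ≤ M)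
    (w : EuclideanSpace ℝ (Fin N) → ℝ → ℝ)
    (hw : ∀ x ∈ U, ∀ t : ℝ,
      G (w x t) = -M * V x - σ + c - lam * (t - t₀) ^ 2 - β * ‖x - x₀‖ ^ 2) :
    ∀ x ∈ U, ∀ t : ℝ, |t - t₀| ≤ δ →
      DifferentiableAt ℝ (w x) t ∧
      ρ x * deriv (w x) t ≤ Laplacian' (fun y => G (w y t)) x := by
  -- basic facts about G
  have hGdiff : Differentiable ℝ G := hG.differentiable one_ne_zero
  have hGpos : ∀ s, 0 < deriv G s := fun s => lt_of_lt_of_le hα₀ (hG' s)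
  have hmono : StrictMono G := strictMono_of_deriv_pos hGpos
  have hHd : Differentiable ℝ (fun s => G s - α₀ * s) :=
    hGdiff.sub (differentiable_id.const_mul α₀)
  have hHderiv : ∀ s, deriv (fun s => G s - α₀ * s) s = deriv G s - α₀ := by
    intro s
    have := ((hGdiff s).hasDerivAt.fun_sub (((hasDerivAt_id s).const_mul α₀))).deriv
    simpa using this
  have hHmono : Monotone (fun s => G s - α₀ * s) := by
    apply monotone_of_deriv_nonneg hHd
    intro s; rw [hHderiv]; linarith [hG' s]
  have hlow : ∀ s : ℝ, 0 ≤ s → G 0 + α₀ * s ≤ G s := by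
    intro s hs
    have := hHmono hs
    simp only at this
    linarith
  have hhigh : ∀ s : ℝ, s ≤ 0 → G s ≤ G 0 + α₀ * s := by
    intro s hs
    have := hHmono hs
    simp only at this
    linarith
  have htop : Tendsto G atTop atTop := by
    apply tendsto_atTop_mono' _ ((eventually_ge_atTop (0:ℝ)).mono fun s hs => hlow s hs)
    exact tendsto_atTop_add_const_left _ _ (tendsto_id.const_mul_atTop hα₀)
  have hbot : Tendsto G atBot atBot := by
    apply tendsto_atBot_mono' _ ((eventually_le_atBot (0:ℝ)).mono fun s hs => hhigh s hs)
    exact tendsto_atBot_add_const_left _ _ ((tendsto_id (α := ℝ)).const_mul_atBot hα₀)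
  have hsurj : Function.Surjective G := hG.continuous.surjective htop hbot
  set e := StrictMono.orderIsoOfSurjective G hmono hsurj with he
  have hinv : ∀ z, G (e.symm z) = z := fun z => e.apply_symm_apply z
  intro x hx t ht
  -- the time slice
  set Fx : ℝ → ℝ := fun s => -M * V x - σ + c - lam * (s - t₀) ^ 2 - β * ‖x - x₀‖ ^ 2 with hFxdef
  have hwfun : w x = fun s => e.symm (Fx s) := by
    funext s
    refine hmono.injective ?_
    rw [hinv (Fx s)]
    exact hw x hx s
  have hFx : HasDerivAt Fx (-(lam * (2 * (t - t₀)))) t := by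
    have h1 : HasDerivAt (fun s : ℝ => (s - t₀) ^ 2) (2 * (t - t₀)) t := by
      simpa using ((hasDerivAt_id t).sub_const t₀).fun_pow 2
    exact ((h1.const_mul lam).const_sub (-M * V x - σ + c)).sub_const (β * ‖x - x₀‖ ^ 2)
  set u := w x t with hu
  have hga : e.symm (Fx t) = u := (congrFun hwfun t).symm
  have hg_deriv : HasDerivAt (⇑e.symm) (deriv G u)⁻¹ (Fx t) := by
    refine HasDerivAt.of_local_left_inverse e.symm.continuous.continuousAt ?_
      (ne_of_gt (hGpos _)) (Eventually.of_forall hinv)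
    rw [hga]; exact (hGdiff _).hasDerivAt
  have hDt : HasDerivAt (w x) ((deriv G u)⁻¹ * -(lam * (2 * (t - t₀)))) t := by
    rw [hwfun]; exact hg_deriv.comp t hFx
  refine ⟨hDt.differentiableAt, ?_⟩
  rw [hDt.deriv]
  -- compute the Laplacian'
  have hevt : (fun y => G (w y t)) =ᶠ[nhds x]
      (fun y => -M * V y + (-σ + c - lam * (t - t₀) ^ 2) - β * ‖y - x₀‖ ^ 2) :=
    eventuallyEq_of_mem (hU.mem_nhds hx) fun y hy => by
      show G (w y t) = _
      rw [hw y hy t]; ring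
  rw [Laplacian_congr' hevt, lap_compute' N U hU V hV x₀ M _ β x hx]
  -- the final inequality
  set g := deriv G u with hgdef
  have hg : α₀ ≤ g := hG' _
  have habs : -(lam * (2 * (t - t₀))) ≤ 2 * lam * δ := by
    have h1 := (abs_le.mp ht).1
    nlinarith [mul_nonneg hlam (by linarith : (0:ℝ) ≤ δ + (t - t₀))]
  have hA : (0:ℝ) ≤ 2 * lam * δ := by positivity
  have hstep1 : g⁻¹ * -(lam * (2 * (t - t₀))) ≤ 2 * lam * δ / α₀ := by
    rw [inv_mul_eq_div, div_le_div_iff₀ (by linarith) hα₀]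
    nlinarith [mul_le_mul_of_nonneg_right habs hα₀.le, mul_le_mul_of_nonneg_left hg hA]
  have hρx : ρ₀ ≤ ρ x := hρ x hx
  have hstep2 : ρ x * (g⁻¹ * -(lam * (2 * (t - t₀)))) ≤ ρ x * (2 * lam * δ / α₀) :=
    mul_le_mul_of_nonneg_left hstep1 (le_trans hρ₀.le hρx)
  have hK : (0:ℝ) ≤ 2 * lam * δ / α₀ := by positivity
  have hB : (0:ℝ) ≤ 2 * β * N / ρ₀ := by positivity
  have hM0 : (0:ℝ) ≤ M := by linarith
  have h1 : M * ρ x ≤ -M * Laplacian' V x := by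
    nlinarith [mul_le_mul_of_nonneg_left (hΔV x hx) hM0]
  have h2 : (2 * β * N / ρ₀) * ρ₀ = 2 * β * N := div_mul_cancel₀ _ (ne_of_gt hρ₀)
  have h3 : ρ x * (2 * lam * δ / α₀) ≤ M * ρ x - 2 * β * N := by
    nlinarith [mul_le_mul_of_nonneg_right hM (by linarith : (0:ℝ) ≤ ρ x),
      mul_le_mul_of_nonneg_left hρx hB]
  linarith
end

section
/- Let N ≥ 1, let U ⊆ ℝ^N be open, let ρ : U → ℝ and ρ₀ > 0 satisfy ρ(x) ≥ ρ₀ for all x ∈ U, and let V : U → ℝ be twice continuously differentiable with ΔV(x) ≤ −ρ(x) for all x ∈ U. Let G : ℝ → ℝ be continuously differentiable with G′(s) ≥ α₀ > 0 for all s ∈ ℝ. Fix x₀ ∈ ℝ^N, t₀ ∈ ℝ, real numbers σ, c, reals λ ≥ 0, β ≥ 0, δ > 0, and M with M ≥ 2βN/ρ₀ + 2λδ/α₀. Suppose w : U × ℝ → ℝ satisfies G(w(x,t)) = M·V(x) + σ + c + λ(t−t₀)² + β‖x−x₀‖² for all (x,t) ∈ U × ℝ. Then for every x ∈ U and every t with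 |t−t₀| ≤ δ, the function t ↦ w(x,t) is differentiable and ρ(x)·∂ₜw(x,t) ≥ Δₓ(G∘w(·,t))(x), where Δₓ(G∘w(·,t)) denotes the Laplacian in x of the map y ↦ G(w(y,t)). -/
/-- The Laplacian of `f : ℝ^N → ℝ`: the sum of the second partial derivatives. -/
noncomputable def LaplacianEuc {N : ℕ} (f : EuclideanSpace ℝ (Fin N) → ℝ)
    (x : EuclideanSpace ℝ (Fin N)) : ℝ :=
  ∑ i : Fin N,
    fderiv ℝ (fun y => fderiv ℝ f y (EuclideanSpace.single i 1)) x (EuclideanSpace.single i 1)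

open Filter

lemma laplacian_congr {N : ℕ} {f g : EuclideanSpace ℝ (Fin N) → ℝ}
    {x : EuclideanSpace ℝ (Fin N)} (h : f =ᶠ[nhds x] g) :
    LaplacianEuc f x = LaplacianEuc g x := by
  unfold LaplacianEuc
  refine Finset.sum_congr rfl fun i _ => ?_
  have h1 : (fun y => fderiv ℝ f y (EuclideanSpace.single i 1))
      =ᶠ[nhds x] (fun y => fderiv ℝ g y (EuclideanSpace.single i 1)) :=
    (h.fderiv (𝕜 := ℝ)).mono fun y hy => by simp only [hy]
  rw [h1.fderiv_eq]

set_option maxHeartbeats 1000000 in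
/-- The upper barrier `w = G⁻¹[MV + σ + c + λ(t-t₀)² + β‖x-x₀‖²]` is a pointwise
supersolution of `ρ ∂ₜ u = Δ[G(u)]` when `inf ρ ≥ ρ₀ > 0`. -/
theorem stmt_5 (N : ℕ) (hN : 1 ≤ N) (U : Set (EuclideanSpace ℝ (Fin N))) (hU : IsOpen U)
    (ρ : EuclideanSpace ℝ (Fin N) → ℝ) (ρ₀ : ℝ) (hρ₀ : 0 < ρ₀)
    (hρ : ∀ x ∈ U, ρ₀ ≤ ρ x)
    (V : EuclideanSpace ℝ (Fin N) → ℝ) (hV : ContDiffOn ℝ 2 V U)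
    (hΔV : ∀ x ∈ U, LaplacianEuc V x ≤ -ρ x)
    (G : ℝ → ℝ) (hG : ContDiff ℝ 1 G)
    (α₀ : ℝ) (hα₀ : 0 < α₀) (hG' : ∀ s : ℝ, α₀ ≤ deriv G s)
    (x₀ : EuclideanSpace ℝ (Fin N)) (t₀ σ c lam β δ M : ℝ)
    (hlam : 0 ≤ lam) (hβ : 0 ≤ β) (hδ : 0 < δ)
    (hM : 2 * β * N / ρ₀ + 2 * lam * δ / α₀ ≤ M)
    (w : EuclideanSpace ℝ (Fin N) → ℝ → ℝ)
    (hw : ∀ x ∈ U, ∀ t : ℝ,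
      G (w x t) = M * V x + σ + c + lam * (t - t₀) ^ 2 + β * ‖x - x₀‖ ^ 2) :
    ∀ x ∈ U, ∀ t : ℝ, |t - t₀| ≤ δ →
      DifferentiableAt ℝ (w x) t ∧
      LaplacianEuc (fun y => G (w y t)) x ≤ ρ x * deriv (w x) t := by
  intro x hx t ht
  set s := w x t with hs
  set g : ℝ → ℝ := fun τ => M * V x + σ + c + lam * (τ - t₀) ^ 2 + β * ‖x - x₀‖ ^ 2 with hgdef
  have hgt : G s = g t := hw x hx t
  -- derivative of g
  have hgd : HasDerivAt g (lam * (2 * (t - t₀))) t := by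
    have h2 : HasDerivAt (fun τ : ℝ => (τ - t₀) ^ 2) (2 * (t - t₀)) t := by
      simpa using ((hasDerivAt_id t).sub_const t₀).fun_pow 2
    exact ((h2.const_mul lam).const_add (M * V x + σ + c)).add_const (β * ‖x - x₀‖ ^ 2)
  -- G has positive derivative everywhere
  have hg'pos : ∀ y : ℝ, 0 < deriv G y := fun y => lt_of_lt_of_le hα₀ (hG' y)
  have hGs : HasStrictDerivAt G (deriv G s) s := hG.contDiffAt.hasStrictDerivAt one_ne_zero
  have hne : deriv G s ≠ 0 := (hg'pos s).ne'
  set φ := hGs.localInverse G (deriv G s) s hne with hφdef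
  have hφ : HasStrictDerivAt φ (deriv G s)⁻¹ (G s) := hGs.to_localInverse hne
  have hri : ∀ᶠ y in nhds (G s), G (φ y) = y :=
    (hGs.hasStrictFDerivAt_equiv hne).eventually_right_inverse
  have hinj : Function.Injective G := (strictMono_of_deriv_pos hg'pos).injective
  -- w x eventually equals φ ∘ g near t
  have hev : w x =ᶠ[nhds t] fun τ => φ (g τ) := by
    have h3 : ∀ᶠ τ in nhds t, G (φ (g τ)) = g τ := by
      rw [hgt] at hri
      exact hgd.continuousAt.tendsto.eventually hri
    filter_upwards [h3] with τ hτ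
    exact hinj ((hw x hx τ).trans hτ.symm)
  have hwt : HasDerivAt (w x) ((deriv G s)⁻¹ * (lam * (2 * (t - t₀)))) t := by
    have h1 : HasDerivAt φ (deriv G s)⁻¹ (g t) := hgt ▸ hφ.hasDerivAt
    exact (h1.comp t hgd).congr_of_eventuallyEq hev
  refine ⟨hwt.differentiableAt, ?_⟩
  rw [hwt.deriv]
  -- spatial part
  have hVd : ∀ y ∈ U, DifferentiableAt ℝ V y := fun y hy =>
    (hV.contDiffAt (hU.mem_nhds hy)).differentiableAt two_ne_zero
  have hA : DifferentiableAt ℝ (fderiv ℝ V) x :=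
    ((hV.contDiffAt (hU.mem_nhds hx)).fderiv_right (by norm_num : (1:WithTop ℕ∞) + 1 ≤ 2)).differentiableAt one_ne_zero
  have key : ∀ (i : Fin N), ∀ y ∈ U,
      fderiv ℝ (fun z => G (w z t)) y (EuclideanSpace.single i 1)
        = M * fderiv ℝ V y (EuclideanSpace.single i 1) + β * (2 * (y i - x₀ i)) := by
    intro i y hy
    have hq : HasFDerivAt (fun z : EuclideanSpace ℝ (Fin N) => ‖z - x₀‖ ^ 2)
        ((2 : ℕ) • (innerSL ℝ (y - x₀))) y := by
      simpa using ((hasFDerivAt_id y).sub_const x₀).norm_sq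
    have hF : HasFDerivAt
        (fun z : EuclideanSpace ℝ (Fin N) =>
          M * V z + σ + c + lam * (t - t₀) ^ 2 + β * ‖z - x₀‖ ^ 2)
        (M • fderiv ℝ V y + β • ((2 : ℕ) • innerSL ℝ (y - x₀))) y :=
      (((((hVd y hy).hasFDerivAt.const_mul M).add_const σ).add_const c).add_const
        (lam * (t - t₀) ^ 2)).add (hq.const_mul β)
    have heq : (fun z => G (w z t)) =ᶠ[nhds y]
        (fun z : EuclideanSpace ℝ (Fin N) =>
          M * V z + σ + c + lam * (t - t₀) ^ 2 + β * ‖z - x₀‖ ^ 2) :=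
      eventually_of_mem (hU.mem_nhds hy) fun z hz => hw z hz t
    rw [heq.fderiv_eq, hF.fderiv]
    simp [EuclideanSpace.inner_single_right, PiLp.sub_apply, mul_comm]
  have h2 : ∀ i : Fin N,
      fderiv ℝ (fun y => fderiv ℝ (fun z => G (w z t)) y (EuclideanSpace.single i 1)) x
          (EuclideanSpace.single i 1)
        = M * fderiv ℝ (fun y => fderiv ℝ V y (EuclideanSpace.single i 1)) x
            (EuclideanSpace.single i 1) + β * 2 := by
    intro i
    have hAi : DifferentiableAt ℝ (fun y => fderiv ℝ V y (EuclideanSpace.single i 1)) x :=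
      hA.clm_apply (differentiableAt_const _)
    have hBd : HasFDerivAt (fun y : EuclideanSpace ℝ (Fin N) => 2 * (y i - x₀ i))
        ((2 : ℝ) • (EuclideanSpace.proj i :
          EuclideanSpace ℝ (Fin N) →L[ℝ] ℝ)) x := by
      simpa using ((EuclideanSpace.proj i :
        EuclideanSpace ℝ (Fin N) →L[ℝ] ℝ).hasFDerivAt.sub_const (x₀ i)).const_mul (2 : ℝ)
    have hR : HasFDerivAt
        (fun y : EuclideanSpace ℝ (Fin N) =>
          M * fderiv ℝ V y (EuclideanSpace.single i 1) + β * (2 * (y i - x₀ i)))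
        (M • fderiv ℝ (fun y => fderiv ℝ V y (EuclideanSpace.single i 1)) x
          + β • ((2 : ℝ) • (EuclideanSpace.proj i :
            EuclideanSpace ℝ (Fin N) →L[ℝ] ℝ))) x :=
      (hAi.hasFDerivAt.const_mul M).add (hBd.const_mul β)
    have heq2 : (fun y => fderiv ℝ (fun z => G (w z t)) y (EuclideanSpace.single i 1))
        =ᶠ[nhds x] (fun y : EuclideanSpace ℝ (Fin N) =>
          M * fderiv ℝ V y (EuclideanSpace.single i 1) + β * (2 * (y i - x₀ i))) :=
      eventually_of_mem (hU.mem_nhds hx) fun y hy => key i y hy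
    rw [heq2.fderiv_eq, hR.fderiv]
    simp [EuclideanSpace.single_apply]
  have hLap : LaplacianEuc (fun y => G (w y t)) x = M * LaplacianEuc V x + β * 2 * N := by
    unfold LaplacianEuc
    rw [Finset.sum_congr rfl fun i _ => h2 i, Finset.sum_add_distrib, ← Finset.mul_sum]
    simp [mul_comm]
  rw [hLap]
  -- final arithmetic
  have hΔ := hΔV x hx
  have hρx := hρ x hx
  have hρxpos : 0 < ρ x := lt_of_lt_of_le hρ₀ hρx
  have hNnn : (0 : ℝ) ≤ N := Nat.cast_nonneg N
  have hMnn : 0 ≤ M := le_trans (by positivity) hM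
  have habs := abs_le.mp ht
  have hinvpos : 0 < (deriv G s)⁻¹ := inv_pos.mpr (hg'pos s)
  have hinvle : (deriv G s)⁻¹ ≤ α₀⁻¹ := by
    exact inv_anti₀ hα₀ (hG' s)
  have hd : -(2 * lam * δ / α₀) ≤ (deriv G s)⁻¹ * (lam * (2 * (t - t₀))) := by
    have h1 : -(2 * lam * δ) ≤ lam * (2 * (t - t₀)) := by nlinarith [habs.1]
    have h2 : (deriv G s)⁻¹ * (-(2 * lam * δ)) ≤ (deriv G s)⁻¹ * (lam * (2 * (t - t₀))) :=
      mul_le_mul_of_nonneg_left h1 hinvpos.le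
    have h3 : -(2 * lam * δ / α₀) ≤ (deriv G s)⁻¹ * (-(2 * lam * δ)) := by
      rw [div_eq_mul_inv]
      nlinarith [mul_nonneg (mul_nonneg (by norm_num : (0:ℝ) ≤ 2) hlam) hδ.le]
    linarith
  have hstep : ρ x * (-(2 * lam * δ / α₀)) ≤ ρ x * ((deriv G s)⁻¹ * (lam * (2 * (t - t₀)))) :=
    mul_le_mul_of_nonneg_left hd hρxpos.le
  have hMV : M * LaplacianEuc V x ≤ M * (-(ρ x)) := mul_le_mul_of_nonneg_left hΔ hMnn
  have hKey : 2 * β * N ≤ ρ x * (M - 2 * lam * δ / α₀) := by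
    have h5 : 2 * β * N / ρ₀ ≤ M - 2 * lam * δ / α₀ := by linarith
    calc 2 * β * (N : ℝ) = ρ₀ * (2 * β * N / ρ₀) := by field_simp
      _ ≤ ρ x * (2 * β * N / ρ₀) := mul_le_mul_of_nonneg_right hρx (by positivity)
      _ ≤ ρ x * (M - 2 * lam * δ / α₀) := mul_le_mul_of_nonneg_left h5 hρxpos.le
  nlinarith [hMV, hKey, hstep]
end

section
/- Let N ≥ 1, let U ⊆ ℝ^N be open, let ρ : U → ℝ and P > 0 satisfy 0 ≤ ρ(x) ≤ P for all x ∈ U, and let h : U → ℝ be twice continuously differentiable with Δh(x) ≤ −1 for all x ∈ U. Let G : ℝ → ℝ be continuously differentiable with G′(s) ≥ α₀ > 0 for all s ∈ ℝ. Fix t₀ ∈ ℝ, real numbers σ, c, reals λ ≥ 0, δ > 0, and M with M ≥ 2λδP/α₀. Suppose w : U × ℝ → ℝ satisfies G(w(x,t)) = −M·h(x) − σ + c − λ(t−t₀)² for all (x,t) ∈ U × ℝ. Then for every x ∈ U and every t with |t−t₀| ≤ δ, the function t ↦ w(x,t) is differentiable and ρ(x)·∂ₜw(x,t) ≤ Δₓ(G∘w(·,t))(x),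 where Δₓ(G∘w(·,t)) denotes the Laplacian in x of the map y ↦ G(w(y,t)). -/
/-- The LaplacianN of `f : ℝ^N → ℝ`: the sum of the second partial derivatives. -/
noncomputable def LaplacianN {N : ℕ} (f : EuclideanSpace ℝ (Fin N) → ℝ)
    (x : EuclideanSpace ℝ (Fin N)) : ℝ :=
  ∑ i : Fin N,
    fderiv ℝ (fun y => fderiv ℝ f y (EuclideanSpace.single i 1)) x (EuclideanSpace.single i 1)

set_option maxHeartbeats 1600000 in
/-- The lower barrier `w = G⁻¹[-Mh - σ + c - λ(t-t₀)²]` built from the Miller function `h`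
is a pointwise subsolution of `ρ ∂ₜ u = Δ[G(u)]` when `0 ≤ ρ ≤ P`. -/
theorem stmt_6 (N : ℕ) (hN : 1 ≤ N) (U : Set (EuclideanSpace ℝ (Fin N))) (hU : IsOpen U)
    (ρ : EuclideanSpace ℝ (Fin N) → ℝ) (P : ℝ) (hP : 0 < P)
    (hρ : ∀ x ∈ U, 0 ≤ ρ x ∧ ρ x ≤ P)
    (h : EuclideanSpace ℝ (Fin N) → ℝ) (hh : ContDiffOn ℝ 2 h U)
    (hΔh : ∀ x ∈ U, LaplacianN h x ≤ -1)
    (G : ℝ → ℝ) (hG : ContDiff ℝ 1 G)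
    (α₀ : ℝ) (hα₀ : 0 < α₀) (hG' : ∀ s : ℝ, α₀ ≤ deriv G s)
    (t₀ σ c lam δ M : ℝ) (hlam : 0 ≤ lam) (hδ : 0 < δ)
    (hM : 2 * lam * δ * P / α₀ ≤ M)
    (w : EuclideanSpace ℝ (Fin N) → ℝ → ℝ)
    (hw : ∀ x ∈ U, ∀ t : ℝ,
      G (w x t) = -M * h x - σ + c - lam * (t - t₀) ^ 2) :
    ∀ x ∈ U, ∀ t : ℝ, |t - t₀| ≤ δ →
      DifferentiableAt ℝ (w x) t ∧
      ρ x * deriv (w x) t ≤ LaplacianN (fun y => G (w y t)) x := by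
  have hGdiff : Differentiable ℝ G := hG.differentiable one_ne_zero
  have hGpos : ∀ s, 0 < deriv G s := fun s => lt_of_lt_of_le hα₀ (hG' s)
  have hGmono : StrictMono G := strictMono_of_deriv_pos hGpos
  -- linear growth of G
  have hφ : Monotone (fun s => G s - α₀ * s) := by
    apply monotone_of_deriv_nonneg (hGdiff.sub (by fun_prop))
    intro s
    have h2 : HasDerivAt (fun y : ℝ => G y - α₀ * y) (deriv G s - α₀ * 1) s :=
      (hGdiff s).hasDerivAt.sub ((hasDerivAt_id s).const_mul α₀)
    rw [show (G - HMul.hMul α₀) = fun y : ℝ => G y - α₀ * y from rfl, h2.deriv]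
    linarith [hG' s]
  have hgrow₁ : ∀ s : ℝ, 0 ≤ s → G 0 + α₀ * s ≤ G s := by
    intro s hs
    have := hφ hs
    simp only at this
    linarith
  have hgrow₂ : ∀ s : ℝ, s ≤ 0 → G s ≤ G 0 + α₀ * s := by
    intro s hs
    have := hφ hs
    simp only at this
    linarith
  have htop : Filter.Tendsto G Filter.atTop Filter.atTop := by
    apply Filter.tendsto_atTop_mono' _ _
      ((Filter.tendsto_atTop_add_const_left _ (G 0)
        (Filter.Tendsto.const_mul_atTop hα₀ Filter.tendsto_id)))
    filter_upwards [Filter.eventually_ge_atTop (0:ℝ)] with s hs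
    exact hgrow₁ s hs
  have hbot : Filter.Tendsto G Filter.atBot Filter.atBot := by
    apply Filter.tendsto_atBot_mono' _ _
      ((Filter.tendsto_atBot_add_const_left _ (G 0)
        (Filter.Tendsto.const_mul_atBot hα₀ Filter.tendsto_id)))
    filter_upwards [Filter.eventually_le_atBot (0:ℝ)] with s hs
    exact hgrow₂ s hs
  have hGsurj : Function.Surjective G := hG.continuous.surjective htop hbot
  set e := StrictMono.orderIsoOfSurjective G hGmono hGsurj with he
  have hecoe : (e : ℝ → ℝ) = G := StrictMono.coe_orderIsoOfSurjective G hGmono hGsurj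
  intro x hx t ht
  set a := w x t with ha
  -- continuity of w x
  have hwx : ∀ s : ℝ, w x s = e.symm (-M * h x - σ + c - lam * (s - t₀) ^ 2) := by
    intro s
    apply hGmono.injective
    have : G (e.symm (-M * h x - σ + c - lam * (s - t₀) ^ 2))
        = -M * h x - σ + c - lam * (s - t₀) ^ 2 := by
      conv_lhs => rw [← hecoe]
      exact e.apply_symm_apply _
    rw [this, hw x hx s]
  have hcont : ContinuousAt (w x) t := by
    have hc : Continuous (fun s : ℝ => e.symm (-M * h x - σ + c - lam * (s - t₀) ^ 2)) :=
      e.symm.continuous.comp (by continuity)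
    have hfe : w x = fun s : ℝ => e.symm (-M * h x - σ + c - lam * (s - t₀) ^ 2) := funext hwx
    rw [hfe]
    exact hc.continuousAt
  -- local inverse of G at a
  have hne : deriv G a ≠ 0 := ne_of_gt (hGpos a)
  have hstrict : HasStrictDerivAt G (deriv G a) a := hG.contDiffAt.hasStrictDerivAt one_ne_zero
  set g := hstrict.localInverse G (deriv G a) a hne with hg
  have hleft : ∀ᶠ y in nhds a, g (G y) = y :=
    (hstrict.hasStrictFDerivAt_equiv hne).eventually_left_inverse
  have hginv : HasStrictDerivAt g (deriv G a)⁻¹ (G a) := hstrict.to_localInverse hne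
  have hweq : w x =ᶠ[nhds t] fun s => g (-M * h x - σ + c - lam * (s - t₀) ^ 2) := by
    have hev : ∀ᶠ s in nhds t, g (G (w x s)) = w x s := hcont.eventually hleft
    filter_upwards [hev] with s hs
    rw [← hs, hw x hx s]
  have hF : HasDerivAt (fun s : ℝ => -M * h x - σ + c - lam * (s - t₀) ^ 2)
      (-(lam * (2 * (t - t₀)))) t := by
    have h1 : HasDerivAt (fun s : ℝ => (s - t₀) ^ 2) (2 * (t - t₀)) t := by
      simpa using ((hasDerivAt_id t).sub_const t₀).fun_pow 2
    simpa using (h1.const_mul lam).const_sub (-M * h x - σ + c)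
  have hGaF : G a = -M * h x - σ + c - lam * (t - t₀) ^ 2 := hw x hx t
  have hcomp : HasDerivAt (fun s => g (-M * h x - σ + c - lam * (s - t₀) ^ 2))
      ((deriv G a)⁻¹ * (-(lam * (2 * (t - t₀))))) t := by
    have := hginv.hasDerivAt
    rw [hGaF] at this
    exact this.comp t hF
  have hwd : HasDerivAt (w x) ((deriv G a)⁻¹ * (-(lam * (2 * (t - t₀))))) t :=
    hcomp.congr_of_eventuallyEq hweq
  refine ⟨hwd.differentiableAt, ?_⟩
  rw [hwd.deriv]
  -- LaplacianN computation
  have hΔ : LaplacianN (fun y => G (w y t)) x = -M * LaplacianN h x := by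
    unfold LaplacianN
    rw [Finset.mul_sum]
    apply Finset.sum_congr rfl
    intro i _
    set v := EuclideanSpace.single i (1:ℝ) with hv
    have hdh : DifferentiableOn ℝ h U := hh.differentiableOn two_ne_zero
    have hdfh : DifferentiableOn ℝ (fderiv ℝ h) U :=
      (hh.fderiv_of_isOpen (m := 1) hU (by norm_num)).differentiableOn one_ne_zero
    have step1 : ∀ y ∈ U, fderiv ℝ (fun z => G (w z t)) y v = -M * fderiv ℝ h y v := by
      intro y hy
      have heq : (fun z => G (w z t)) =ᶠ[nhds y]
          (fun z => -M * h z - σ + c - lam * (t - t₀) ^ 2) :=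
        Filter.eventuallyEq_of_mem (hU.mem_nhds hy) (fun z hz => hw z hz t)
      rw [heq.fderiv_eq]
      have : fderiv ℝ (fun z => -M * h z - σ + c - lam * (t - t₀) ^ 2) y
          = -M • fderiv ℝ h y := by
        have hd : DifferentiableAt ℝ h y := hdh.differentiableAt (hU.mem_nhds hy)
        have : (fun z => -M * h z - σ + c - lam * (t - t₀) ^ 2)
            = (fun z => -M * h z + (- σ + c - lam * (t - t₀) ^ 2)) := by
          funext z; ring
        rw [this, fderiv_add_const, fderiv_const_mul hd]
      rw [this]
      simp
    have step2 : (fun y => fderiv ℝ (fun z => G (w z t)) y v) =ᶠ[nhds x]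
        (fun y => -M * fderiv ℝ h y v) :=
      Filter.eventuallyEq_of_mem (hU.mem_nhds hx) step1
    rw [step2.fderiv_eq]
    have hdiff : DifferentiableAt ℝ (fun y => fderiv ℝ h y v) x := by
      have h1 : DifferentiableAt ℝ (fderiv ℝ h) x := hdfh.differentiableAt (hU.mem_nhds hx)
      exact (ContinuousLinearMap.apply ℝ ℝ v).differentiableAt.comp x h1
    rw [fderiv_const_mul hdiff (-M)]
    simp
  rw [hΔ]
  -- final estimate
  obtain ⟨hρ0, hρP⟩ := hρ x hx
  have hL := hΔh x hx
  have hM0 : 0 ≤ M := le_trans (by positivity) hM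
  have hMle : M ≤ -M * LaplacianN h x := by nlinarith
  refine le_trans ?_ hMle
  have hd : 0 < deriv G a := hGpos a
  have hαd : α₀ ≤ deriv G a := hG' a
  have habs := abs_le.1 ht
  have hrw : ρ x * ((deriv G a)⁻¹ * (-(lam * (2 * (t - t₀)))))
      = (ρ x * (lam * (2 * (t₀ - t)))) / deriv G a := by
    field_simp
    ring
  rw [hrw, div_le_iff₀ hd]
  have hnum : ρ x * (lam * (2 * (t₀ - t))) ≤ 2 * lam * δ * P := by
    nlinarith [mul_nonneg hρ0 hlam, mul_nonneg (sub_nonneg.2 hρP) hlam]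
  have hMα : 2 * lam * δ * P ≤ M * α₀ := by
    rw [div_le_iff₀ hα₀] at hM
    linarith
  nlinarith [mul_le_mul_of_nonneg_left hαd hM0]
end
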